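/- Fix ε ∈ (0, 1/2). For each t ≥ 0 let f_t(ℓ, u) = max{Φ(u − t) − Φ(ℓ + t) − (1 − ε), 0}. Then the function (ℓ, u) ↦ √(g_ε(ℓ, u)) is concave on the convex set S = {(ℓ, u) : Φ(u) − Φ(ℓ) ≥ 1 − ε}, where g_ε(ℓ, u) = ∫₀^∞ f_t(ℓ, u) dt. -/

import Mathlib

open MeasureTheory Set

open scoped ENNReal

/-- The standard Gaussian cumulative distribution function. -/
noncomputable def Phi (x : ℝ) : ℝ :=
  (∫ s in Set.Iic x, Real.exp (-s ^ 2 / 2)) / Real.sqrt (2 * Real.pi)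

/-- `g ε ℓ u = ∫₀^∞ max{Φ(u − t) − Φ(ℓ + t) − (1 − ε), 0} dt`. -/
noncomputable def g (ε ℓ u : ℝ) : ℝ :=
  ∫ t in Set.Ioi (0:ℝ), max (Phi (u - t) - Phi (ℓ + t) - (1 - ε)) 0

lemma gauss_eq : (fun s : ℝ => Real.exp (-s ^ 2 / 2)) = fun s : ℝ => Real.exp (-(1/2) * s ^ 2) := by
  funext s; ring_nf

lemma gauss_integrable : Integrable (fun s : ℝ => Real.exp (-s ^ 2 / 2)) := by
  rw [gauss_eq]; exact integrable_exp_neg_mul_sq (by norm_num)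

lemma gauss_cont : Continuous (fun s : ℝ => Real.exp (-s ^ 2 / 2)) := by
  continuity

lemma gauss_total : (∫ s : ℝ, Real.exp (-s ^ 2 / 2)) = Real.sqrt (2 * Real.pi) := by
  rw [gauss_eq]
  rw [integral_gaussian]
  rw [div_div_eq_mul_div, div_one, mul_comm]

lemma sqrt_two_pi_pos : 0 < Real.sqrt (2 * Real.pi) :=
  Real.sqrt_pos.2 (by positivity)

lemma Phi_hasDeriv (x : ℝ) :
    HasDerivAt Phi (Real.exp (-x ^ 2 / 2) / Real.sqrt (2 * Real.pi)) x := by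
  have key : ∀ y : ℝ, Phi y =
      ((∫ s in Set.Iic (0:ℝ), Real.exp (-s ^ 2 / 2)) + ∫ s in (0:ℝ)..y, Real.exp (-s ^ 2 / 2))
        / Real.sqrt (2 * Real.pi) := by
    intro y
    unfold Phi
    congr 1
    have := intervalIntegral.integral_Iic_sub_Iic (gauss_integrable.integrableOn (s := Iic 0))
      (gauss_integrable.integrableOn (s := Iic y))
    linarith [this]
  have hd : HasDerivAt (fun y => ∫ s in (0:ℝ)..y, Real.exp (-s ^ 2 / 2))
      (Real.exp (-x ^ 2 / 2)) x := by
    exact intervalIntegral.integral_hasDerivAt_right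
      (gauss_cont.intervalIntegrable _ _)
      (gauss_cont.stronglyMeasurableAtFilter _ _)
      gauss_cont.continuousAt
  have h2 := (hd.const_add (∫ s in Set.Iic (0:ℝ), Real.exp (-s ^ 2 / 2))).div_const
    (Real.sqrt (2 * Real.pi))
  have : Phi = fun y => ((∫ s in Set.Iic (0:ℝ), Real.exp (-s ^ 2 / 2))
      + ∫ s in (0:ℝ)..y, Real.exp (-s ^ 2 / 2)) / Real.sqrt (2 * Real.pi) := funext key
  rw [this]
  exact h2

lemma Phi_continuous : Continuous Phi := by
  have : Differentiable ℝ Phi := fun x => (Phi_hasDeriv x).differentiableAt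
  exact this.continuous

lemma Phi_mono : Monotone Phi := by
  intro x y hxy
  unfold Phi
  apply div_le_div_of_nonneg_right ?_ sqrt_two_pi_pos.le
  · exact setIntegral_mono_set gauss_integrable.integrableOn
      (Filter.Eventually.of_forall fun s => (Real.exp_pos _).le)
      (HasSubset.Subset.eventuallyLE (Iic_subset_Iic.2 hxy))

lemma Phi_pos (x : ℝ) : 0 < Phi x := by
  unfold Phi
  apply div_pos ?_ sqrt_two_pi_pos
  have h1 : (0:ℝ) < ∫ s in (x-1)..x, Real.exp (-s ^ 2 / 2) := by
    apply intervalIntegral.intervalIntegral_pos_of_pos_on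
      (gauss_cont.intervalIntegrable _ _)
      (fun s _ => Real.exp_pos _) (by linarith)
  have h2 : (∫ s in (x-1)..x, Real.exp (-s ^ 2 / 2))
      = ∫ s in Ioc (x-1) x, Real.exp (-s ^ 2 / 2) := by
    rw [intervalIntegral.integral_of_le (by linarith)]
  have h3 : (∫ s in Ioc (x-1) x, Real.exp (-s ^ 2 / 2)) ≤ ∫ s in Iic x, Real.exp (-s ^ 2 / 2) := by
    apply setIntegral_mono_set gauss_integrable.integrableOn
      (Filter.Eventually.of_forall fun s => (Real.exp_pos _).le)
      (HasSubset.Subset.eventuallyLE Ioc_subset_Iic_self)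
  linarith [h2 ▸ h1]

lemma Phi_le_one (x : ℝ) : Phi x ≤ 1 := by
  unfold Phi
  rw [div_le_one sqrt_two_pi_pos, ← gauss_total]
  exact setIntegral_le_integral gauss_integrable
    (Filter.Eventually.of_forall fun s => (Real.exp_pos _).le)

lemma Phi_zero : Phi 0 = 1 / 2 := by
  have heven : (∫ s in Iic (0:ℝ), Real.exp (-s ^ 2 / 2))
      = ∫ s in Ioi (0:ℝ), Real.exp (-s ^ 2 / 2) := by
    have h0 : (∫ s in Iic (0:ℝ), Real.exp (-s ^ 2 / 2))
        = ∫ s in Iic (0:ℝ), Real.exp (-(-s) ^ 2 / 2) := by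
      simp [neg_sq]
    have h1 := integral_comp_neg_Iic (0:ℝ) (fun s => Real.exp (-s ^ 2 / 2))
    rw [neg_zero] at h1
    exact h0.trans h1
  have hsplit : (∫ s in Iic (0:ℝ), Real.exp (-s ^ 2 / 2))
      + (∫ s in Ioi (0:ℝ), Real.exp (-s ^ 2 / 2)) = Real.sqrt (2 * Real.pi) := by
    rw [← gauss_total]
    exact intervalIntegral.integral_Iic_add_Ioi gauss_integrable.integrableOn gauss_integrable.integrableOn
  unfold Phi
  rw [div_eq_iff sqrt_two_pi_pos.ne']
  linarith [heven, hsplit]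

lemma Phi_deriv : deriv Phi = fun x => Real.exp (-x ^ 2 / 2) / Real.sqrt (2 * Real.pi) :=
  funext fun x => (Phi_hasDeriv x).deriv

lemma Phi_concaveOn : ConcaveOn ℝ (Ici (0:ℝ)) Phi := by
  apply AntitoneOn.concaveOn_of_deriv (convex_Ici 0) Phi_continuous.continuousOn
    (fun x _ => (Phi_hasDeriv x).differentiableAt.differentiableWithinAt)
  rw [Phi_deriv, interior_Ici]
  intro x hx y hy hxy
  have h2 : x ^ 2 ≤ y ^ 2 := by nlinarith [show (0:ℝ) < x from hx, hxy]
  exact div_le_div_of_nonneg_right (Real.exp_le_exp.2 (by linarith)) sqrt_two_pi_pos.le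

lemma Phi_convexOn : ConvexOn ℝ (Iic (0:ℝ)) Phi := by
  apply MonotoneOn.convexOn_of_deriv (convex_Iic 0) Phi_continuous.continuousOn
    (fun x _ => (Phi_hasDeriv x).differentiableAt.differentiableWithinAt)
  rw [Phi_deriv, interior_Iic]
  intro x hx y hy hxy
  have h2 : y ^ 2 ≤ x ^ 2 := by nlinarith [show y < (0:ℝ) from hy, hxy]
  exact div_le_div_of_nonneg_right (Real.exp_le_exp.2 (by linarith)) sqrt_two_pi_pos.le

/-- The integrand shifted: `hh ε ℓ u t = Φ(u-t) - Φ(ℓ+t) - (1-ε)`. -/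
noncomputable def hh (ε ℓ u t : ℝ) : ℝ := Phi (u - t) - Phi (ℓ + t) - (1 - ε)

/-- Capped super-level set of `hh` in `t`. -/
def Aset (ε ℓ u s : ℝ) : Set ℝ := {t | s ≤ hh ε ℓ u t} ∩ Icc 0 (max u 0)

/-- Right endpoint of the super-level set. -/
noncomputable def tau (ε ℓ u s : ℝ) : ℝ := sSup (Aset ε ℓ u s)

lemma hh_cont (ε ℓ u : ℝ) : Continuous (hh ε ℓ u) := by
  unfold hh
  exact ((Phi_continuous.comp (continuous_const.sub continuous_id)).sub
    (Phi_continuous.comp (continuous_const.add continuous_id))).sub continuous_const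

lemma hh_anti (ε ℓ u : ℝ) : Antitone (hh ε ℓ u) := by
  intro t t' htt'
  unfold hh
  have h1 : Phi (u - t') ≤ Phi (u - t) := Phi_mono (by linarith)
  have h2 : Phi (ℓ + t) ≤ Phi (ℓ + t') := Phi_mono (by linarith)
  linarith

/-- If `hh ≥ 0` then we are in the critical strip. -/
lemma crit {ε ℓ u t : ℝ} (hε : ε ∈ Set.Ioo (0:ℝ) (1/2)) (h : 0 ≤ hh ε ℓ u t) :
    0 < u - t ∧ ℓ + t < 0 := by
  obtain ⟨hε0, hε2⟩ := hε
  have h1 : Phi 0 < Phi (u - t) := by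
    rw [Phi_zero]
    have := Phi_pos (ℓ + t)
    unfold hh at h; linarith
  have h2 : Phi (ℓ + t) < Phi 0 := by
    rw [Phi_zero]
    have := Phi_le_one (u - t)
    unfold hh at h; linarith
  constructor
  · by_contra hc
    exact absurd (Phi_mono (by linarith : u - t ≤ 0)) (not_le.2 h1)
  · by_contra hc
    exact absurd (Phi_mono (by linarith : (0:ℝ) ≤ ℓ + t)) (not_le.2 h2)

lemma Aset_bddAbove (ε ℓ u s : ℝ) : BddAbove (Aset ε ℓ u s) :=
  BddAbove.mono (inter_subset_right) (bddAbove_Icc)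

lemma Aset_compact (ε ℓ u s : ℝ) : IsCompact (Aset ε ℓ u s) := by
  apply IsCompact.inter_left isCompact_Icc
  exact isClosed_le continuous_const (hh_cont ε ℓ u)

lemma tau_nonneg (ε ℓ u s : ℝ) : 0 ≤ tau ε ℓ u s := by
  rcases eq_empty_or_nonempty (Aset ε ℓ u s) with h | h
  · simp [tau, h, Real.sSup_empty]
  · obtain ⟨t, ht⟩ := h
    exact le_trans ht.2.1 (le_csSup (Aset_bddAbove ε ℓ u s) ht)

lemma tau_mem {ε ℓ u s : ℝ} (hs : s ≤ hh ε ℓ u 0) : tau ε ℓ u s ∈ Aset ε ℓ u s := by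
  apply (Aset_compact ε ℓ u s).sSup_mem
  exact ⟨0, hs, le_refl 0, le_max_right u 0⟩

lemma tau_anti (ε ℓ u : ℝ) : Antitone (tau ε ℓ u) := by
  intro s s' hss'
  rcases eq_empty_or_nonempty (Aset ε ℓ u s') with h | h
  · rw [tau, h, Real.sSup_empty]; exact tau_nonneg ε ℓ u s
  · exact csSup_le_csSup (Aset_bddAbove ε ℓ u s)
      h (fun t ht => ⟨le_trans hss' ht.1, ht.2⟩)

lemma le_tau {ε ℓ u s t : ℝ} (hε : ε ∈ Set.Ioo (0:ℝ) (1/2)) (ht : 0 ≤ t) (hs : 0 ≤ s)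
    (h : s ≤ hh ε ℓ u t) : t ≤ tau ε ℓ u s := by
  apply le_csSup (Aset_bddAbove ε ℓ u s)
  have := (crit hε (le_trans hs h)).1
  exact ⟨h, ht, le_max_of_le_left (by linarith)⟩

lemma tau_measurable (ε ℓ u : ℝ) : Measurable (tau ε ℓ u) :=
  (tau_anti ε ℓ u).measurable

/-- The lower Lebesgue integral version of `g`. -/
noncomputable def Gl (ε ℓ u : ℝ) : ℝ≥0∞ :=
  ∫⁻ t in Ioi (0:ℝ), ENNReal.ofReal (max (hh ε ℓ u t) 0)

lemma g_eq_Gl (ε ℓ u : ℝ) : g ε ℓ u = (Gl ε ℓ u).toReal := by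
  unfold g Gl hh
  exact integral_eq_lintegral_of_nonneg_ae
    (Filter.Eventually.of_forall fun t => le_max_right _ _)
    (((hh_cont ε ℓ u).max continuous_const).aestronglyMeasurable)

lemma Gl_ne_top {ε ℓ u : ℝ} (hε : ε ∈ Set.Ioo (0:ℝ) (1/2)) : Gl ε ℓ u ≠ ⊤ := by
  have hb : ∀ t ∈ Ioi (0:ℝ), ENNReal.ofReal (max (hh ε ℓ u t) 0)
      ≤ (Ioc (0:ℝ) (max u 0)).indicator (fun _ => (1:ℝ≥0∞)) t := by
    intro t ht
    rcases le_or_gt (hh ε ℓ u t) 0 with h | h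
    · simp [max_eq_right h]
    · have hc := (crit hε h.le).1
      have htmem : t ∈ Ioc (0:ℝ) (max u 0) := ⟨ht, le_max_of_le_left (by linarith)⟩
      rw [indicator_of_mem htmem]
      rw [max_eq_left h.le]
      have h1 := Phi_le_one (u - t)
      have h2 := Phi_pos (ℓ + t)
      have h3 := hε.2
      apply ENNReal.ofReal_le_one.2
      unfold hh
      linarith
  have h1 : Gl ε ℓ u ≤ ∫⁻ t in Ioi (0:ℝ), (Ioc (0:ℝ) (max u 0)).indicator
      (fun _ => (1:ℝ≥0∞)) t :=
    setLIntegral_mono (measurable_const.indicator measurableSet_Ioc) hb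
  have h2 : (∫⁻ t in Ioi (0:ℝ), (Ioc (0:ℝ) (max u 0)).indicator (fun _ => (1:ℝ≥0∞)) t)
      = volume.restrict (Ioi 0) (Ioc (0:ℝ) (max u 0)) := by
    rw [lintegral_indicator measurableSet_Ioc]; simp
  have h3 : volume.restrict (Ioi 0) (Ioc (0:ℝ) (max u 0)) < ⊤ := by
    rw [Measure.restrict_apply measurableSet_Ioc]
    exact lt_of_le_of_lt (measure_mono inter_subset_left)
      (by rw [Real.volume_Ioc]; exact ENNReal.ofReal_lt_top)
  exact (lt_of_le_of_lt (h1.trans_eq h2) h3).ne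

lemma Gl_layercake (ε ℓ u : ℝ) :
    Gl ε ℓ u = ∫⁻ s in Ioi (0:ℝ),
      volume.restrict (Ioi 0) {t : ℝ | s ≤ max (hh ε ℓ u t) 0} := by
  exact lintegral_eq_lintegral_meas_le (volume.restrict (Ioi 0))
    (Filter.Eventually.of_forall fun t => le_max_right _ _)
    (((hh_cont ε ℓ u).max continuous_const).measurable.aemeasurable)

/-- Upper bound: `Gl ≤ ∫₀^H τ`. -/
lemma Gl_le_tau_integral {ε ℓ u : ℝ} (hε : ε ∈ Set.Ioo (0:ℝ) (1/2)) :
    Gl ε ℓ u ≤ ∫⁻ s in Ioc (0:ℝ) (hh ε ℓ u 0), ENNReal.ofReal (tau ε ℓ u s) := by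
  rw [Gl_layercake]
  have hpt : ∀ s ∈ Ioi (0:ℝ),
      volume.restrict (Ioi 0) {t : ℝ | s ≤ max (hh ε ℓ u t) 0}
        ≤ (Ioc (0:ℝ) (hh ε ℓ u 0)).indicator (fun s => ENNReal.ofReal (tau ε ℓ u s)) s := by
    intro s hs
    have hs0 : (0:ℝ) < s := hs
    rw [Measure.restrict_apply' measurableSet_Ioi]
    rcases le_or_gt s (hh ε ℓ u 0) with hsH | hsH
    · rw [indicator_of_mem (show s ∈ Ioc (0:ℝ) (hh ε ℓ u 0) from ⟨hs0, hsH⟩)]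
      have hsub : {t : ℝ | s ≤ max (hh ε ℓ u t) 0} ∩ Ioi 0 ⊆ Ioc 0 (tau ε ℓ u s) := by
        intro t ht
        have htm : s ≤ max (hh ε ℓ u t) 0 := ht.1
        have htpos : (0:ℝ) < t := ht.2
        have hst : s ≤ hh ε ℓ u t := (le_max_iff.1 htm).resolve_right (by linarith)
        exact ⟨htpos, le_tau hε (le_of_lt htpos) hs0.le hst⟩
      calc volume ({t : ℝ | s ≤ max (hh ε ℓ u t) 0} ∩ Ioi 0)
          ≤ volume (Ioc 0 (tau ε ℓ u s)) := measure_mono hsub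
        _ = ENNReal.ofReal (tau ε ℓ u s) := by rw [Real.volume_Ioc, sub_zero]
    · have hempty : {t : ℝ | s ≤ max (hh ε ℓ u t) 0} ∩ Ioi 0 = ∅ := by
        ext t
        simp only [mem_inter_iff, mem_setOf_eq, mem_Ioi, mem_empty_iff_false, iff_false, not_and]
        intro htm htpos
        have h1 : hh ε ℓ u t ≤ hh ε ℓ u 0 := hh_anti ε ℓ u htpos.le
        rcases le_max_iff.1 htm with h | h <;> linarith
      rw [hempty]
      simp
  calc (∫⁻ s in Ioi (0:ℝ), volume.restrict (Ioi 0) {t : ℝ | s ≤ max (hh ε ℓ u t) 0})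
      ≤ ∫⁻ s in Ioi (0:ℝ),
          (Ioc (0:ℝ) (hh ε ℓ u 0)).indicator (fun s => ENNReal.ofReal (tau ε ℓ u s)) s :=
        setLIntegral_mono ((ENNReal.measurable_ofReal.comp (tau_measurable ε ℓ u)).indicator
          measurableSet_Ioc) hpt
    _ = ∫⁻ s in Ioc (0:ℝ) (hh ε ℓ u 0) ∩ Ioi 0, ENNReal.ofReal (tau ε ℓ u s) := by
        rw [lintegral_indicator measurableSet_Ioc, Measure.restrict_restrict measurableSet_Ioc]
    _ = ∫⁻ s in Ioc (0:ℝ) (hh ε ℓ u 0), ENNReal.ofReal (tau ε ℓ u s) := by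
        rw [inter_eq_left.2 (fun s hs => hs.1)]

/-- Lower bound: `∫₀^c τ ≤ Gl` for every `c`. -/
lemma tau_integral_le_Gl {ε ℓ u : ℝ} (c : ℝ) :
    (∫⁻ s in Ioc (0:ℝ) c, ENNReal.ofReal (tau ε ℓ u s)) ≤ Gl ε ℓ u := by
  rw [Gl_layercake]
  have hpt : ∀ s ∈ Ioc (0:ℝ) c,
      ENNReal.ofReal (tau ε ℓ u s) ≤ volume.restrict (Ioi 0) {t : ℝ | s ≤ max (hh ε ℓ u t) 0} := by
    intro s hs
    rw [Measure.restrict_apply' measurableSet_Ioi]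
    have hsub : Ioo (0:ℝ) (tau ε ℓ u s) ⊆ {t : ℝ | s ≤ max (hh ε ℓ u t) 0} ∩ Ioi 0 := by
      rintro t ⟨ht0, htlt⟩
      refine ⟨?_, ht0⟩
      have hne : (Aset ε ℓ u s).Nonempty := by
        by_contra hc
        rw [not_nonempty_iff_eq_empty] at hc
        have : tau ε ℓ u s = 0 := by rw [tau, hc, Real.sSup_empty]
        linarith
      obtain ⟨t', ht', htt'⟩ := exists_lt_of_lt_csSup hne htlt
      have : s ≤ hh ε ℓ u t := le_trans ht'.1 (hh_anti ε ℓ u htt'.le)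
      exact le_max_of_le_left this
    calc ENNReal.ofReal (tau ε ℓ u s) = volume (Ioo (0:ℝ) (tau ε ℓ u s)) := by
          rw [Real.volume_Ioo, sub_zero]
      _ ≤ volume ({t : ℝ | s ≤ max (hh ε ℓ u t) 0} ∩ Ioi 0) := measure_mono hsub
  have hmono : (∫⁻ s in Ioc (0:ℝ) c, ENNReal.ofReal (tau ε ℓ u s))
      ≤ ∫⁻ s in Ioc (0:ℝ) c, volume.restrict (Ioi 0) {t : ℝ | s ≤ max (hh ε ℓ u t) 0} := by
    apply setLIntegral_mono ?_ hpt
    have : Antitone (fun s => volume.restrict (Ioi 0) {t : ℝ | s ≤ max (hh ε ℓ u t) 0}) := by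
      intro s s' hss'
      exact measure_mono (fun t ht => le_trans hss' ht)
    exact this.measurable
  refine hmono.trans ?_
  exact lintegral_mono_set (Ioc_subset_Ioi_self)

/-- Linear change of variables for lintegrals over `Ioc 0 b`. -/
lemma lintegral_Ioc_scale {f : ℝ → ℝ≥0∞} (hf : Measurable f) {c b : ℝ} (hc : 0 < c) :
    (∫⁻ s in Ioc (0:ℝ) b, f (c * s)) = ENNReal.ofReal (1/c) * ∫⁻ s in Ioc (0:ℝ) (c * b), f s := by
  have hmeas : Measurable fun x : ℝ => c * x := measurable_const_mul c
  have key : ∀ s : ℝ, (Ioc (0:ℝ) b).indicator (fun s => f (c * s)) s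
      = (Ioc (0:ℝ) (c * b)).indicator f (c * s) := by
    intro s
    by_cases hmem : s ∈ Ioc (0:ℝ) b
    · rw [indicator_of_mem hmem, indicator_of_mem]
      exact ⟨mul_pos hc hmem.1, mul_le_mul_of_nonneg_left hmem.2 hc.le⟩
    · rw [indicator_of_notMem hmem, indicator_of_notMem]
      intro hcs
      have h1 : (0:ℝ) < c * s := hcs.1
      have h2 : c * s ≤ c * b := hcs.2
      exact hmem ⟨by nlinarith, by nlinarith⟩
  calc (∫⁻ s in Ioc (0:ℝ) b, f (c * s))
      = ∫⁻ s, (Ioc (0:ℝ) b).indicator (fun s => f (c * s)) s := by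
        rw [← lintegral_indicator measurableSet_Ioc]
    _ = ∫⁻ s, (Ioc (0:ℝ) (c * b)).indicator f (c * s) := by
        congr 1; funext s; exact key s
    _ = ∫⁻ y, (Ioc (0:ℝ) (c * b)).indicator f y ∂(Measure.map (fun x => c * x) volume) := by
        rw [lintegral_map (hf.indicator measurableSet_Ioc) hmeas]
    _ = ENNReal.ofReal (1/c) * ∫⁻ s in Ioc (0:ℝ) (c * b), f s := by
        rw [Real.map_volume_mul_left hc.ne', lintegral_smul_measure,
          lintegral_indicator measurableSet_Ioc, abs_of_pos (inv_pos.2 hc), one_div, smul_eq_mul]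

/-- Joint concavity of `hh` in `(t, ℓ, u)` on the critical strip. -/
lemma hh_comb {ε ℓ₁ u₁ ℓ₂ u₂ t₁ t₂ s₁ s₂ a b : ℝ} (hε : ε ∈ Set.Ioo (0:ℝ) (1/2))
    (ha : 0 ≤ a) (hb : 0 ≤ b) (hab : a + b = 1)
    (hs₁ : 0 ≤ s₁) (hs₂ : 0 ≤ s₂)
    (h₁ : s₁ ≤ hh ε ℓ₁ u₁ t₁) (h₂ : s₂ ≤ hh ε ℓ₂ u₂ t₂) :
    a * s₁ + b * s₂ ≤ hh ε (a*ℓ₁+b*ℓ₂) (a*u₁+b*u₂) (a*t₁+b*t₂) := by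
  obtain ⟨hc₁u, hc₁l⟩ := crit hε (hs₁.trans h₁)
  obtain ⟨hc₂u, hc₂l⟩ := crit hε (hs₂.trans h₂)
  have hu : a • Phi (u₁ - t₁) + b • Phi (u₂ - t₂) ≤ Phi (a • (u₁ - t₁) + b • (u₂ - t₂)) :=
    Phi_concaveOn.2 (le_of_lt hc₁u) (le_of_lt hc₂u) ha hb hab
  have hl : Phi (a • (ℓ₁ + t₁) + b • (ℓ₂ + t₂)) ≤ a • Phi (ℓ₁ + t₁) + b • Phi (ℓ₂ + t₂) :=
    Phi_convexOn.2 (le_of_lt hc₁l) (le_of_lt hc₂l) ha hb hab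
  simp only [smul_eq_mul] at hu hl
  have e1 : a * (u₁ - t₁) + b * (u₂ - t₂) = (a*u₁+b*u₂) - (a*t₁+b*t₂) := by ring
  have e2 : a * (ℓ₁ + t₁) + b * (ℓ₂ + t₂) = (a*ℓ₁+b*ℓ₂) + (a*t₁+b*t₂) := by ring
  rw [e1] at hu
  rw [e2] at hl
  unfold hh at h₁ h₂ ⊢
  have k1 := mul_le_mul_of_nonneg_left h₁ ha
  have k2 := mul_le_mul_of_nonneg_left h₂ hb
  have hab' : a*(1-ε)+b*(1-ε) = 1-ε := by rw [← add_mul, hab, one_mul]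
  linarith [k1, k2, hab']

/-- Combination inequality for `tau`. -/
lemma tau_comb {ε ℓ₁ u₁ ℓ₂ u₂ s₁ s₂ a b : ℝ} (hε : ε ∈ Set.Ioo (0:ℝ) (1/2))
    (ha : 0 ≤ a) (hb : 0 ≤ b) (hab : a + b = 1)
    (hs₁ : 0 ≤ s₁) (hs₂ : 0 ≤ s₂)
    (h1 : s₁ ≤ hh ε ℓ₁ u₁ 0) (h2 : s₂ ≤ hh ε ℓ₂ u₂ 0) :
    a * tau ε ℓ₁ u₁ s₁ + b * tau ε ℓ₂ u₂ s₂
      ≤ tau ε (a*ℓ₁+b*ℓ₂) (a*u₁+b*u₂) (a*s₁+b*s₂) := by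
  obtain ⟨hm1, ht1a, _⟩ := tau_mem h1
  obtain ⟨hm2, ht2a, _⟩ := tau_mem h2
  have hcomb := hh_comb hε ha hb hab hs₁ hs₂ hm1 hm2
  exact le_tau hε (by positivity) (by positivity) hcomb

/-- The constraint set is convex. -/
lemma S_convex {ε : ℝ} (hε : ε ∈ Set.Ioo (0:ℝ) (1/2)) :
    Convex ℝ {p : ℝ × ℝ | 1 - ε ≤ Phi p.2 - Phi p.1} := by
  intro p hp q hq a b ha hb hab
  have hp' : (0:ℝ) ≤ hh ε p.1 p.2 0 := by
    unfold hh; simp only [sub_zero, add_zero]; simp only [mem_setOf_eq] at hp; linarith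
  have hq' : (0:ℝ) ≤ hh ε q.1 q.2 0 := by
    unfold hh; simp only [sub_zero, add_zero]; simp only [mem_setOf_eq] at hq; linarith
  have := hh_comb hε ha hb hab (le_refl 0) (le_refl 0) hp' hq'
  simp only [mem_setOf_eq]
  have h0 : a * (0:ℝ) + b * 0 = 0 := by ring
  rw [h0] at this
  unfold hh at this
  simp only [sub_zero, add_zero] at this
  have : (a • p + b • q).1 = a * p.1 + b * q.1 := rfl
  have h2 : (a • p + b • q).2 = a * p.2 + b * q.2 := rfl
  rw [this, h2]
  unfold hh at *
  linarith [‹(0:ℝ) ≤ Phi (a*p.2+b*q.2) - Phi (a*p.1+b*q.1) - (1-ε)›]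

/-- Cauchy–Schwarz / AM–GM numeric step. -/
lemma final_numeric {a b H₁ H₂ G₁ G₂ : ℝ} (ha : 0 ≤ a) (hb : 0 ≤ b)
    (hG₁ : 0 ≤ G₁) (hG₂ : 0 ≤ G₂) (hH₁ : 0 ≤ H₁) (hH₂ : 0 ≤ H₂)
    (hz₁ : H₁ = 0 → G₁ = 0) (hz₂ : H₂ = 0 → G₂ = 0) :
    (a * Real.sqrt G₁ + b * Real.sqrt G₂) ^ 2
      ≤ a * ((a * H₁ + b * H₂) * (G₁ / H₁)) + b * ((a * H₁ + b * H₂) * (G₂ / H₂)) := by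
  rcases eq_or_lt_of_le hH₁ with h1 | h1
  · have hG1 : G₁ = 0 := hz₁ h1.symm
    subst hG1
    rw [Real.sqrt_zero, mul_zero, zero_add]
    rcases eq_or_lt_of_le hH₂ with h2 | h2
    · have hG2 : G₂ = 0 := hz₂ h2.symm
      subst hG2
      simp
    · rw [← h1]
      have : b * ((a * 0 + b * H₂) * (G₂ / H₂)) = b ^ 2 * G₂ := by
        field_simp; ring
      rw [this, mul_pow, Real.sq_sqrt hG₂]
      simp
  · rcases eq_or_lt_of_le hH₂ with h2 | h2
    · have hG2 : G₂ = 0 := hz₂ h2.symm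
      subst hG2
      rw [Real.sqrt_zero, mul_zero, add_zero]
      rw [← h2]
      have : a * ((a * H₁ + b * 0) * (G₁ / H₁)) = a ^ 2 * G₁ := by
        field_simp; ring
      rw [this, mul_pow, Real.sq_sqrt hG₁]
      simp
    · obtain ⟨r₁, hr₁, rfl⟩ : ∃ r, 0 ≤ r ∧ r ^ 2 = G₁ :=
        ⟨Real.sqrt G₁, Real.sqrt_nonneg _, Real.sq_sqrt hG₁⟩
      obtain ⟨r₂, hr₂, rfl⟩ : ∃ r, 0 ≤ r ∧ r ^ 2 = G₂ :=
        ⟨Real.sqrt G₂, Real.sqrt_nonneg _, Real.sq_sqrt hG₂⟩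
      rw [Real.sqrt_sq hr₁, Real.sqrt_sq hr₂, ← sub_nonneg]
      have key : a * ((a * H₁ + b * H₂) * (r₁ ^ 2 / H₁)) + b * ((a * H₁ + b * H₂) * (r₂ ^ 2 / H₂))
          - (a * r₁ + b * r₂) ^ 2 = (a * b / (H₁ * H₂)) * (H₂ * r₁ - H₁ * r₂) ^ 2 := by
        field_simp
        ring
      rw [key]
      positivity

lemma g_zero_of_H_zero {ε ℓ u : ℝ} (hH : hh ε ℓ u 0 ≤ 0) : g ε ℓ u = 0 := by
  rw [g_eq_Gl]
  have hzero : Gl ε ℓ u = 0 := by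
    unfold Gl
    rw [setLIntegral_congr_fun measurableSet_Ioi (
      (fun t (ht : t ∈ Ioi (0:ℝ)) => show ENNReal.ofReal (max (hh ε ℓ u t) 0) = 0 by
        rw [max_eq_right (le_trans (hh_anti ε ℓ u (le_of_lt ht)) hH)]
        simp))]
    simp
  rw [hzero]
  simp

set_option maxHeartbeats 1000000 in
theorem stmt_9 (ε : ℝ) (hε : ε ∈ Set.Ioo (0:ℝ) (1/2)) :
    ConcaveOn ℝ {p : ℝ × ℝ | 1 - ε ≤ Phi p.2 - Phi p.1}
      (fun p : ℝ × ℝ => Real.sqrt (g ε p.1 p.2)) := by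
  refine ⟨S_convex hε, ?_⟩
  rintro ⟨ℓ₁, u₁⟩ hp ⟨ℓ₂, u₂⟩ hq a b ha hb hab
  simp only [mem_setOf_eq] at hp hq
  show a • Real.sqrt (g ε ℓ₁ u₁) + b • Real.sqrt (g ε ℓ₂ u₂)
      ≤ Real.sqrt (g ε (a * ℓ₁ + b * ℓ₂) (a * u₁ + b * u₂))
  simp only [smul_eq_mul]
  -- notation
  have hH₁ : (0:ℝ) ≤ hh ε ℓ₁ u₁ 0 := by unfold hh; simp only [sub_zero, add_zero]; linarith
  have hH₂ : (0:ℝ) ≤ hh ε ℓ₂ u₂ 0 := by unfold hh; simp only [sub_zero, add_zero]; linarith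
  set H₁ := hh ε ℓ₁ u₁ 0 with hH₁def
  set H₂ := hh ε ℓ₂ u₂ 0 with hH₂def
  set G₁ := g ε ℓ₁ u₁ with hG₁def
  set G₂ := g ε ℓ₂ u₂ with hG₂def
  have hG₁nn : 0 ≤ G₁ := by rw [hG₁def, g_eq_Gl]; exact ENNReal.toReal_nonneg
  have hG₂nn : 0 ≤ G₂ := by rw [hG₂def, g_eq_Gl]; exact ENNReal.toReal_nonneg
  have hz₁ : H₁ = 0 → G₁ = 0 := fun h => g_zero_of_H_zero (le_of_eq h)
  have hz₂ : H₂ = 0 → G₂ = 0 := fun h => g_zero_of_H_zero (le_of_eq h)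
  set Hb := a * H₁ + b * H₂ with hHbdef
  have hHbnn : 0 ≤ Hb := by positivity
  rcases eq_or_lt_of_le hHbnn with hHb0 | hHb
  · -- degenerate case : both weighted heights vanish
    have haH : a * H₁ = 0 := by nlinarith [mul_nonneg ha hH₁, mul_nonneg hb hH₂]
    have hbH : b * H₂ = 0 := by nlinarith [mul_nonneg ha hH₁, mul_nonneg hb hH₂]
    have h1 : a * Real.sqrt G₁ = 0 := by
      rcases mul_eq_zero.1 haH with h | h
      · rw [h, zero_mul]
      · rw [hz₁ h, Real.sqrt_zero, mul_zero]
    have h2 : b * Real.sqrt G₂ = 0 := by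
      rcases mul_eq_zero.1 hbH with h | h
      · rw [h, zero_mul]
      · rw [hz₂ h, Real.sqrt_zero, mul_zero]
    rw [h1, h2, add_zero]
    exact Real.sqrt_nonneg _
  · -- main case
    set c₁ := H₁ / Hb with hc₁def
    set c₂ := H₂ / Hb with hc₂def
    set ℓr := a * ℓ₁ + b * ℓ₂ with hℓrdef
    set ur := a * u₁ + b * u₂ with hurdef
    have hτ₁m : Measurable fun s => ENNReal.ofReal (tau ε ℓ₁ u₁ s) :=
      ENNReal.measurable_ofReal.comp (tau_measurable ε ℓ₁ u₁)
    have hτ₁m' : Measurable fun s => ENNReal.ofReal (tau ε ℓ₁ u₁ (c₁ * s)) :=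
      hτ₁m.comp (measurable_const_mul c₁)
    have hτ₂m' : Measurable fun s => ENNReal.ofReal (tau ε ℓ₂ u₂ (c₂ * s)) :=
      (ENNReal.measurable_ofReal.comp (tau_measurable ε ℓ₂ u₂)).comp (measurable_const_mul c₂)
    have hτ₂m : Measurable fun s => ENNReal.ofReal (tau ε ℓ₂ u₂ s) :=
      ENNReal.measurable_ofReal.comp (tau_measurable ε ℓ₂ u₂)
    have hτrm : Measurable fun s => ENNReal.ofReal (tau ε ℓr ur s) :=
      ENNReal.measurable_ofReal.comp (tau_measurable ε ℓr ur)
    -- pointwise combination bound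
    have hpt : ∀ s ∈ Ioc (0:ℝ) Hb,
        ENNReal.ofReal a * ENNReal.ofReal (tau ε ℓ₁ u₁ (c₁ * s))
          + ENNReal.ofReal b * ENNReal.ofReal (tau ε ℓ₂ u₂ (c₂ * s))
        ≤ ENNReal.ofReal (tau ε ℓr ur s) := by
      intro s hs
      have hs0 : (0:ℝ) < s := hs.1
      have hsH : s ≤ Hb := hs.2
      have hc₁nn : 0 ≤ c₁ := div_nonneg hH₁ hHb.le
      have hc₂nn : 0 ≤ c₂ := div_nonneg hH₂ hHb.le
      have hs₁nn : 0 ≤ c₁ * s := mul_nonneg hc₁nn hs0.le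
      have hs₂nn : 0 ≤ c₂ * s := mul_nonneg hc₂nn hs0.le
      have e1 : c₁ * s ≤ H₁ := by
        rw [hc₁def, div_mul_eq_mul_div, div_le_iff₀ hHb]
        nlinarith
      have e2 : c₂ * s ≤ H₂ := by
        rw [hc₂def, div_mul_eq_mul_div, div_le_iff₀ hHb]
        nlinarith
      have hcomb := tau_comb hε ha hb hab hs₁nn hs₂nn (e1.trans_eq hH₁def)
        (e2.trans_eq hH₂def)
      have harg : a * (c₁ * s) + b * (c₂ * s) = s := by
        rw [hc₁def, hc₂def]
        field_simp
        ring
      rw [harg] at hcomb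
      calc ENNReal.ofReal a * ENNReal.ofReal (tau ε ℓ₁ u₁ (c₁ * s))
            + ENNReal.ofReal b * ENNReal.ofReal (tau ε ℓ₂ u₂ (c₂ * s))
          = ENNReal.ofReal (a * tau ε ℓ₁ u₁ (c₁ * s) + b * tau ε ℓ₂ u₂ (c₂ * s)) := by
            rw [ENNReal.ofReal_add (mul_nonneg ha (tau_nonneg _ _ _ _))
              (mul_nonneg hb (tau_nonneg _ _ _ _)), ENNReal.ofReal_mul ha,
              ENNReal.ofReal_mul hb]
        _ ≤ ENNReal.ofReal (tau ε ℓr ur s) := ENNReal.ofReal_le_ofReal hcomb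
    -- per-component lower bounds after scaling
    have key₁ : ENNReal.ofReal (Hb * (G₁ / H₁))
        ≤ ∫⁻ s in Ioc (0:ℝ) Hb, ENNReal.ofReal (tau ε ℓ₁ u₁ (c₁ * s)) := by
      rcases eq_or_lt_of_le hH₁ with h | h
      · rw [hz₁ h.symm, zero_div, mul_zero, ENNReal.ofReal_zero]
        exact zero_le
      · have hc : 0 < c₁ := div_pos h hHb
        rw [lintegral_Ioc_scale hτ₁m hc]
        have harg2 : c₁ * Hb = H₁ := by rw [hc₁def]; field_simp
        rw [harg2]
        have hval : Hb * (G₁ / H₁) = (1 / c₁) * G₁ := by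
          rw [hc₁def]
          field_simp
        rw [hval, ENNReal.ofReal_mul (by positivity)]
        have step_a : ENNReal.ofReal G₁ ≤ Gl ε ℓ₁ u₁ := by
          rw [hG₁def, g_eq_Gl]
          exact ENNReal.ofReal_toReal_le
        exact mul_le_mul_right (step_a.trans (Gl_le_tau_integral hε)) _
    have key₂ : ENNReal.ofReal (Hb * (G₂ / H₂))
        ≤ ∫⁻ s in Ioc (0:ℝ) Hb, ENNReal.ofReal (tau ε ℓ₂ u₂ (c₂ * s)) := by
      rcases eq_or_lt_of_le hH₂ with h | h
      · rw [hz₂ h.symm, zero_div, mul_zero, ENNReal.ofReal_zero]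
        exact zero_le
      · have hc : 0 < c₂ := div_pos h hHb
        rw [lintegral_Ioc_scale hτ₂m hc]
        have harg2 : c₂ * Hb = H₂ := by rw [hc₂def]; field_simp
        rw [harg2]
        have hval : Hb * (G₂ / H₂) = (1 / c₂) * G₂ := by
          rw [hc₂def]
          field_simp
        rw [hval, ENNReal.ofReal_mul (by positivity)]
        have step_a : ENNReal.ofReal G₂ ≤ Gl ε ℓ₂ u₂ := by
          rw [hG₂def, g_eq_Gl]
          exact ENNReal.ofReal_toReal_le
        exact mul_le_mul_right (step_a.trans (Gl_le_tau_integral hε)) _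
    -- assemble the chain in ℝ≥0∞
    set X := a * (Hb * (G₁ / H₁)) + b * (Hb * (G₂ / H₂)) with hXdef
    have hXnn : 0 ≤ X := by positivity
    have chain : ENNReal.ofReal X ≤ Gl ε ℓr ur := by
      have split : ENNReal.ofReal X = ENNReal.ofReal a * ENNReal.ofReal (Hb * (G₁ / H₁))
          + ENNReal.ofReal b * ENNReal.ofReal (Hb * (G₂ / H₂)) := by
        rw [hXdef, ENNReal.ofReal_add (by positivity) (by positivity),
          ENNReal.ofReal_mul ha, ENNReal.ofReal_mul hb]
      rw [split]
      have hsum : ENNReal.ofReal a * ENNReal.ofReal (Hb * (G₁ / H₁))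
            + ENNReal.ofReal b * ENNReal.ofReal (Hb * (G₂ / H₂))
          ≤ ∫⁻ s in Ioc (0:ℝ) Hb,
              (ENNReal.ofReal a * ENNReal.ofReal (tau ε ℓ₁ u₁ (c₁ * s))
                + ENNReal.ofReal b * ENNReal.ofReal (tau ε ℓ₂ u₂ (c₂ * s))) := by
        rw [lintegral_add_left (hτ₁m'.const_mul _), lintegral_const_mul _ hτ₁m',
          lintegral_const_mul _ hτ₂m']
        exact add_le_add (mul_le_mul_right key₁ _) (mul_le_mul_right key₂ _)
      refine hsum.trans ?_
      refine (setLIntegral_mono hτrm hpt).trans ?_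
      exact tau_integral_le_Gl Hb
    have hXle : X ≤ g ε ℓr ur := by
      rw [g_eq_Gl]
      calc X = (ENNReal.ofReal X).toReal := (ENNReal.toReal_ofReal hXnn).symm
        _ ≤ (Gl ε ℓr ur).toReal := ENNReal.toReal_mono (Gl_ne_top hε) chain
    -- final numeric inequality
    have hnum := final_numeric ha hb hG₁nn hG₂nn hH₁ hH₂ hz₁ hz₂
    have hsq : (a * Real.sqrt G₁ + b * Real.sqrt G₂) ^ 2 ≤ g ε ℓr ur := by
      refine le_trans hnum (le_trans (le_of_eq ?_) hXle)
      rw [hXdef]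
    calc a * Real.sqrt G₁ + b * Real.sqrt G₂
        = Real.sqrt ((a * Real.sqrt G₁ + b * Real.sqrt G₂) ^ 2) :=
          (Real.sqrt_sq (by positivity)).symm
      _ ≤ Real.sqrt (g ε ℓr ur) := Real.sqrt_le_sqrt hsq
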